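/- Let G be a graph, let X, Y ⊆ V(G), and let S be an important (X,Y)-separator. Then for every v ∈ S, the set S \ {v} is an important (X \ {v}, Y \ {v})-separator in the graph G − {v}. -/

import Mathlib

set_option maxHeartbeats 1000000

variable {V : Type}



/-- The graph obtained from `G` by deleting the vertex set `S`
(deleted vertices are kept as isolated vertices). -/
def gdelete (G : SimpleGraph V) (S : Set V) : SimpleGraph V where
  Adj u v := G.Adj u v ∧ u ∉ S ∧ v ∉ S
  symm := ⟨by intro u v h; exact ⟨h.1.symm, h.2.2, h.2.1⟩⟩
  loopless := ⟨by intro v h; exact G.irrefl h.1⟩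

/-- `R_G(X, S)`: the set of vertices reachable from `X \ S` in `G − S`. -/
def greach (G : SimpleGraph V) (X S : Set V) : Set V :=
  {v | v ∉ S ∧ ∃ x ∈ X \ S, (gdelete G S).Reachable x v}

/-- `S` is an `(X,Y)`-separator: no vertex of `Y` is reachable from `X \ S` in `G − S`. -/
def IsSep (G : SimpleGraph V) (X Y S : Set V) : Prop := Y ∩ greach G X S = ∅

/-- A minimal `(X,Y)`-separator: none of its proper subsets is an `(X,Y)`-separator. -/
def IsMinSep (G : SimpleGraph V) (X Y S : Set V) : Prop :=
  IsSep G X Y S ∧ ∀ S' ⊂ S, ¬ IsSep G X Y S'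

/-- `S'` dominates `S`: `|S'| ≤ |S|` and `R_G(X, S) ⊊ R_G(X, S')`. -/
def SepDominates (G : SimpleGraph V) (X S' S : Set V) : Prop :=
  S'.ncard ≤ S.ncard ∧ greach G X S ⊂ greach G X S'

/-- An important `(X,Y)`-separator: minimal and dominated by no `(X,Y)`-separator. -/
def IsImpSep (G : SimpleGraph V) (X Y S : Set V) : Prop :=
  IsMinSep G X Y S ∧ ¬ ∃ S', IsSep G X Y S' ∧ SepDominates G X S' S


lemma gdelete_gdelete (G : SimpleGraph V) (v : V) (S' : Set V) :
    gdelete (gdelete G {v}) S' = gdelete G (insert v S') := by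
  ext u w
  simp only [gdelete, Set.mem_insert_iff, Set.mem_singleton_iff]
  tauto

lemma not_reach_of_mem (G : SimpleGraph V) (T : Set V) {x v : V}
    (hv : v ∈ T) (hxv : x ≠ v) : ¬ (gdelete G T).Reachable x v := by
  intro h
  obtain ⟨w⟩ := h.symm
  cases w with
  | nil => exact hxv rfl
  | cons h' _ => exact h'.2.1 hv

lemma greach_del (G : SimpleGraph V) (X : Set V) (v : V) (S' : Set V) :
    greach (gdelete G {v}) (X \ {v}) S' = greach G X (insert v S') := by
  ext w
  simp only [greach, Set.mem_setOf_eq, gdelete_gdelete, Set.mem_diff,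
    Set.mem_insert_iff, Set.mem_singleton_iff]
  constructor
  · rintro ⟨hw, x, ⟨⟨hxX, hxv⟩, hxS⟩, hr⟩
    refine ⟨?_, x, ⟨hxX, ?_⟩, hr⟩
    · rintro (rfl | hwS)
      · exact not_reach_of_mem G _ (Set.mem_insert _ _) hxv hr
      · exact hw hwS
    · tauto
  · rintro ⟨hw, x, ⟨hxX, hxS⟩, hr⟩
    exact ⟨fun h => hw (Or.inr h), x, ⟨⟨hxX, fun h => hxS (Or.inl h)⟩,
      fun h => hxS (Or.inr h)⟩, hr⟩

lemma greach_disj (G : SimpleGraph V) (X T : Set V) {w : V} (h : w ∈ greach G X T) :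
    w ∉ T := h.1

/-- if `S` is an important `(X,Y)`-separator then for every `v ∈ S` the
set `S \ {v}` is an important `(X \ {v}, Y \ {v})`-separator in `G − {v}`. -/
theorem stmt8 [Fintype V] (G : SimpleGraph V) (X Y S : Set V)
    (hS : IsImpSep G X Y S) :
    ∀ v ∈ S, IsImpSep (gdelete G {v}) (X \ {v}) (Y \ {v}) (S \ {v}) := by
  intro v hv
  have hins : insert v (S \ {v}) = S := Set.insert_diff_singleton.trans (by
    simpa using Set.insert_eq_self.2 hv)
  have hR : greach (gdelete G {v}) (X \ {v}) (S \ {v}) = greach G X S := by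
    rw [greach_del, hins]
  have sep_iff : ∀ S' : Set V,
      IsSep (gdelete G {v}) (X \ {v}) (Y \ {v}) S' ↔ IsSep G X Y (insert v S') := by
    intro S'
    unfold IsSep
    rw [greach_del]
    constructor
    · intro h
      ext w
      simp only [Set.mem_inter_iff, Set.mem_empty_iff_false, iff_false, not_and]
      intro hwY hwR
      have hwv : w ≠ v := by
        rintro rfl; exact (greach_disj G X _ hwR) (Set.mem_insert _ _)
      have : w ∈ (Y \ {v}) ∩ greach G X (insert v S') := ⟨⟨hwY, hwv⟩, hwR⟩
      rw [h] at this; exact this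
    · intro h
      ext w
      simp only [Set.mem_inter_iff, Set.mem_empty_iff_false, iff_false, not_and]
      intro hwY hwR
      have : w ∈ Y ∩ greach G X (insert v S') := ⟨hwY.1, hwR⟩
      rw [h] at this; exact this
  refine ⟨⟨?_, ?_⟩, ?_⟩
  · -- separator
    unfold IsSep
    rw [hR]
    have := hS.1.1
    unfold IsSep at this
    ext w
    simp only [Set.mem_inter_iff, Set.mem_empty_iff_false, iff_false, not_and]
    intro hwY hwR
    have h0 : Y ∩ greach G X S = ∅ := hS.1.1
    have : w ∈ Y ∩ greach G X S := ⟨hwY.1, hwR⟩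
    rw [h0] at this
    exact this
  · -- minimality
    intro S' hS' hsep
    have hvS' : v ∉ S' := fun h => (hS'.1 h).2 rfl
    have hsub : insert v S' ⊂ S := by
      constructor
      · intro u hu
        rcases hu with rfl | hu
        · exact hv
        · exact (hS'.1 hu).1
      · intro hsup
        obtain ⟨u, huS, huS'⟩ := Set.exists_of_ssubset hS'
        rcases hsup huS.1 with rfl | h
        · exact huS.2 rfl
        · exact huS' h
    exact hS.1.2 _ hsub ((sep_iff S').1 hsep)
  · -- importance
    rintro ⟨S', hsep, hcard, hlt⟩
    apply hS.2
    refine ⟨insert v S', (sep_iff S').1 hsep, ?_, ?_⟩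
    · calc (insert v S').ncard ≤ S'.ncard + 1 :=
            Set.ncard_insert_le _ _
        _ ≤ (S \ {v}).ncard + 1 := by omega
        _ = S.ncard := Set.ncard_diff_singleton_add_one hv (Set.toFinite S)
    · rw [greach_del, greach_del, hins] at hlt
      exact hlt
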